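/- Let S ⊆ {1, …, p}, let α* ∈ ℝ^p with α*_j = 0 for all j ∈ S, let r > 0, λ > 0 and weights w_1, …, w_p > 0. Suppose that for every j ∈ S and every ξ in the closed Euclidean ball B̄(α*, r), |∂ℓ_n/∂α_j(ξ)| < λ w_j. Then every maximizer α̂ of the penalized log-likelihood α ↦ ℓ_n(α) − λ Σ_{j=1}^p w_j |α_j| over B̄(α*, r) satisfies α̂_j = 0 for all j ∈ S. -/

import Mathlib

open Finset
open scoped RealInnerProductSpace

noncomputable def qoalDeriv (n p : ℕ) (x : Fin n → EuclideanSpace ℝ (Fin p))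
    (z : Fin n → ℝ) (a : EuclideanSpace ℝ (Fin p)) :
    EuclideanSpace ℝ (Fin p) →L[ℝ] ℝ :=
  ∑ i, (z i - Real.exp ⟪x i, a⟫ / (1 + Real.exp ⟪x i, a⟫)) • innerSL ℝ (x i)

lemma hasFDerivAt_loglik (n p : ℕ) (x : Fin n → EuclideanSpace ℝ (Fin p))
    (z : Fin n → ℝ) (a : EuclideanSpace ℝ (Fin p)) :
    HasFDerivAt (fun a : EuclideanSpace ℝ (Fin p) =>
        ∑ i, (z i * ⟪x i, a⟫ - Real.log (1 + Real.exp ⟪x i, a⟫)))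
      (qoalDeriv n p x z a) a := by
  unfold qoalDeriv
  apply HasFDerivAt.fun_sum
  intro i _
  have h1 : HasFDerivAt (fun b : EuclideanSpace ℝ (Fin p) => z i * ⟪x i, b⟫)
      (z i • innerSL ℝ (x i)) a := by
    have := (innerSL ℝ (x i)).hasFDerivAt (x := a)
    simpa using this.const_mul (z i)
  have hpos : (0:ℝ) < 1 + Real.exp ⟪x i, a⟫ := by positivity
  have h2 : HasDerivAt (fun t : ℝ => Real.log (1 + Real.exp t))
      (Real.exp ⟪x i, a⟫ / (1 + Real.exp ⟪x i, a⟫)) ⟪x i, a⟫ := by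
    have he : HasDerivAt (fun t : ℝ => 1 + Real.exp t) (Real.exp ⟪x i, a⟫) ⟪x i, a⟫ :=
      (Real.hasDerivAt_exp _).const_add 1
    exact he.log (ne_of_gt hpos)
  have h3 : HasFDerivAt (fun b : EuclideanSpace ℝ (Fin p) =>
      Real.log (1 + Real.exp ⟪x i, b⟫))
      ((Real.exp ⟪x i, a⟫ / (1 + Real.exp ⟪x i, a⟫)) • innerSL ℝ (x i)) a :=
    h2.comp_hasFDerivAt a ((innerSL ℝ (x i)).hasFDerivAt)
  have := h1.fun_sub h3
  simpa [sub_smul] using this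

theorem penalized_loglik_local_maximizer_sparse (n p : ℕ)
    (x : Fin n → EuclideanSpace ℝ (Fin p)) (z : Fin n → ℝ)
    (hz : ∀ i, z i = 0 ∨ z i = 1)
    (S : Finset (Fin p)) (αstar : EuclideanSpace ℝ (Fin p))
    (hαstar : ∀ j ∈ S, αstar j = 0)
    (r lam : ℝ) (hr : 0 < r) (hlam : 0 < lam)
    (w : Fin p → ℝ) (hw : ∀ j, 0 < w j)
    (hderiv : ∀ j ∈ S, ∀ ξ ∈ Metric.closedBall αstar r,
      |fderiv ℝ
          (fun a : EuclideanSpace ℝ (Fin p) =>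
            ∑ i, (z i * ⟪x i, a⟫ - Real.log (1 + Real.exp ⟪x i, a⟫))) ξ
          (EuclideanSpace.single j 1)| < lam * w j)
    (αhat : EuclideanSpace ℝ (Fin p)) (hmem : αhat ∈ Metric.closedBall αstar r)
    (hmax : ∀ β ∈ Metric.closedBall αstar r,
      (∑ i, (z i * ⟪x i, β⟫ - Real.log (1 + Real.exp ⟪x i, β⟫)))
          - lam * ∑ j, w j * |β j|
        ≤ (∑ i, (z i * ⟪x i, αhat⟫ - Real.log (1 + Real.exp ⟪x i, αhat⟫)))
          - lam * ∑ j, w j * |αhat j|) :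
    ∀ j ∈ S, αhat j = 0 := by
  intro j hj
  by_contra hne
  set ℓ : EuclideanSpace ℝ (Fin p) → ℝ := fun a =>
    ∑ i, (z i * ⟪x i, a⟫ - Real.log (1 + Real.exp ⟪x i, a⟫)) with hℓ
  set β : EuclideanSpace ℝ (Fin p) := αhat - (αhat j) • EuclideanSpace.single j 1 with hβ
  have hβj : β j = 0 := by
    simp [hβ, EuclideanSpace.single_apply]
  have hβk : ∀ k, k ≠ j → β k = αhat k := by
    intro k hk
    simp [hβ, EuclideanSpace.single_apply, hk, Ne.symm hk]
  -- β is in the ball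
  have hβmem : β ∈ Metric.closedBall αstar r := by
    rw [Metric.mem_closedBall] at hmem ⊢
    refine le_trans ?_ hmem
    rw [EuclideanSpace.dist_eq, EuclideanSpace.dist_eq]
    apply Real.sqrt_le_sqrt
    apply Finset.sum_le_sum
    intro k _
    by_cases hk : k = j
    · rw [hk, hβj, hαstar j hj]
      nlinarith [dist_self (0:ℝ), sq_nonneg (dist (αhat j) (0:ℝ)), dist_nonneg (x := αhat j) (y := (0:ℝ))]
    · rw [hβk k hk]
  -- the segment derivative
  set v : EuclideanSpace ℝ (Fin p) := β - αhat with hv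
  have hv' : v = (-(αhat j)) • EuclideanSpace.single j 1 := by
    simp [hv, hβ, neg_smul]
  set g : ℝ → ℝ := fun t => ℓ (αhat + t • v) with hg
  have hgd : ∀ t : ℝ, HasDerivAt g ((qoalDeriv n p x z (αhat + t • v)) v) t := by
    intro t
    have hγ : HasDerivAt (fun t : ℝ => αhat + t • v) v t := by
      simpa using ((hasDerivAt_id t).smul_const v).const_add αhat
    exact (hasFDerivAt_loglik n p x z (αhat + t • v)).comp_hasDerivAt t hγ
  obtain ⟨c, hc, hslope⟩ := exists_hasDerivAt_eq_slope g
      (fun t => (qoalDeriv n p x z (αhat + t • v)) v) zero_lt_one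
      (fun t _ => (hgd t).continuousAt.continuousWithinAt)
      (fun t _ => hgd t)
  set ξc : EuclideanSpace ℝ (Fin p) := αhat + c • v with hξc
  have hξmem : ξc ∈ Metric.closedBall αstar r := by
    have h1 : ξc = (1 - c) • αhat + c • β := by
      rw [hξc, hv]; module
    rw [h1]
    exact (convex_closedBall αstar r) hmem hβmem (by linarith [hc.1, hc.2])
      (le_of_lt hc.1) (by ring)
  have hd := hderiv j hj ξc hξmem
  rw [(hasFDerivAt_loglik n p x z ξc).fderiv] at hd
  -- compute g' c
  have hgc : (qoalDeriv n p x z ξc) v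
      = (-(αhat j)) * (qoalDeriv n p x z ξc) (EuclideanSpace.single j 1) := by
    rw [hv', map_smul]; simp
  have hg1 : g 1 = ℓ β := by simp [hg, hv]
  have hg0 : g 0 = ℓ αhat := by simp [hg]
  have hdiff : ℓ β - ℓ αhat = (-(αhat j)) * (qoalDeriv n p x z ξc) (EuclideanSpace.single j 1) := by
    rw [← hg1, ← hg0, ← hgc]
    have := hslope
    rw [show (1:ℝ) - 0 = 1 by norm_num, div_one] at this
    linarith [this]
  -- penalty identity
  have hpen : ∑ k, w k * |αhat k| - ∑ k, w k * |β k| = w j * |αhat j| := by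
    rw [← Finset.sum_sub_distrib]
    have : ∀ k ∈ Finset.univ, w k * |αhat k| - w k * |β k|
        = if k = j then w j * |αhat j| else 0 := by
      intro k _
      by_cases hk : k = j
      · subst hk; rw [hβj]; simp
      · rw [hβk k hk]; simp [hk]
    rw [Finset.sum_congr rfl this, Finset.sum_ite_eq' Finset.univ j]
    simp
  -- bound: |ℓ β - ℓ αhat| < lam * w j * |αhat j|
  have habs : |ℓ β - ℓ αhat| < |αhat j| * (lam * w j) := by
    rw [hdiff, abs_mul, abs_neg]
    exact mul_lt_mul_of_pos_left hd (abs_pos.mpr hne)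
  have hmaxβ := hmax β hβmem
  have hkey : ℓ β - ℓ αhat ≤ -(lam * (w j * |αhat j|)) := by
    have : lam * ∑ k, w k * |αhat k| - lam * ∑ k, w k * |β k| = lam * (w j * |αhat j|) := by
      rw [← mul_sub, hpen]
    simp only [hℓ] at hmaxβ ⊢
    linarith [hmaxβ, this]
  have hneg : -(ℓ β - ℓ αhat) ≤ |ℓ β - ℓ αhat| := neg_le_abs _
  have heq : lam * (w j * |αhat j|) = |αhat j| * (lam * w j) := by ring
  linarith [hkey, hneg, habs]
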